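/- For all n ≥ 1, the game burning number of the path P_n satisfies ⌈√(2n+1) − 1⌉ ≤ b_g(P_n) ≤ ⌈√(2n + 1/4) − 1/2⌉, and the Staller-start version satisfies ⌈√(2n+2) − 1⌉ ≤ b_g'(P_n) ≤ ⌈√(2n + 1/4) − 1/2⌉. -/

import Mathlib

namespace BurningGame

/-- One spreading phase: all neighbors of burned vertices become burned. -/
noncomputable def spread {V : Type*} [Fintype V] [DecidableEq V] (G : SimpleGraph V) (B : Finset V) : Finset V :=
  ((↑B : Set V) ∪ {v | ∃ u ∈ B, G.Adj u v}).toFinite.toFinset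

/-- `EndBy G turn i B k`: starting from burned set `B` at round index `i`
(the player selecting in round `i` is Burner iff `turn i = true`; Burner's selections are
quantified existentially, Staller's universally), Burner can force the game to end
within `k` further rounds. -/
def EndBy {V : Type*} [Fintype V] [DecidableEq V] (G : SimpleGraph V) (turn : ℕ → Bool) :
    ℕ → Finset V → ℕ → Prop
  | _, B, 0 => B = Finset.univ
  | i, B, k + 1 => B = Finset.univ ∨
      spread G B = Finset.univ ∨
      (if turn i then ∃ v ∉ spread G B, EndBy G turn (i + 1) (insert v (spread G B)) k
       else ∀ v ∉ spread G B, EndBy G turn (i + 1) (insert v (spread G B)) k)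

/-- Game burning number relative to a preburned set `S` (Burner starts). -/
noncomputable def bgRel {V : Type*} [Fintype V] [DecidableEq V] (G : SimpleGraph V) (S : Finset V) : ℕ :=
  sInf {k | EndBy G (fun i => i % 2 == 0) 0 S k}

/-- The game burning number (Burner starts). -/
noncomputable def bg {V : Type*} [Fintype V] [DecidableEq V] (G : SimpleGraph V) : ℕ := bgRel G ∅

/-- The Staller-start game burning number. -/
noncomputable def bg' {V : Type*} [Fintype V] [DecidableEq V] (G : SimpleGraph V) : ℕ :=
  sInf {k | EndBy G (fun i => i % 2 == 1) 0 ∅ k}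

/-- The burning number: only Burner plays. -/
noncomputable def burn {V : Type*} [Fintype V] [DecidableEq V] (G : SimpleGraph V) : ℕ :=
  sInf {k | EndBy G (fun _ => true) 0 ∅ k}

/-- The cooling number: only Staller plays. -/
noncomputable def cool {V : Type*} [Fintype V] [DecidableEq V] (G : SimpleGraph V) : ℕ :=
  sInf {k | EndBy G (fun _ => false) 0 ∅ k}

open Finset SimpleGraph

section Basic
variable {V : Type*} [Fintype V] [DecidableEq V] {G : SimpleGraph V}

lemma mem_spread {B : Finset V} {v : V} :
    v ∈ spread G B ↔ v ∈ B ∨ ∃ u ∈ B, G.Adj u v := by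
  simp [spread, Set.Finite.mem_toFinset]

lemma subset_spread (B : Finset V) : B ⊆ spread G B := fun v hv => mem_spread.2 (Or.inl hv)

lemma spread_mono {B B' : Finset V} (h : B ⊆ B') : spread G B ⊆ spread G B' := by
  intro v hv
  rcases mem_spread.1 hv with h1 | ⟨u, hu, ha⟩
  · exact mem_spread.2 (Or.inl (h h1))
  · exact mem_spread.2 (Or.inr ⟨u, h hu, ha⟩)

lemma spread_empty : spread G (∅ : Finset V) = ∅ := by
  ext v; simp [mem_spread]

open scoped Classical in

noncomputable def bpairs (G : SimpleGraph V) (B : Finset V) : Finset (V × V) :=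
  ((Finset.univ ×ˢ Finset.univ).filter fun p : V × V => p.1 ∈ B ∧ p.2 ∉ B ∧ G.Adj p.1 p.2)

noncomputable def bdry (G : SimpleGraph V) (B : Finset V) : ℕ := (bpairs G B).card

lemma mem_bpairs {B : Finset V} {p : V × V} :
    p ∈ bpairs G B ↔ p.1 ∈ B ∧ p.2 ∉ B ∧ G.Adj p.1 p.2 := by
  classical
  simp [bpairs]

lemma card_spread_le (B : Finset V) : (spread G B).card ≤ B.card + bdry G B := by
  classical
  have h1 : (spread G B).card ≤ B.card + (spread G B \ B).card := by
    calc (spread G B).card ≤ (B ∪ (spread G B \ B)).card := by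
          apply Finset.card_le_card
          intro v hv
          by_cases hvB : v ∈ B
          · exact Finset.mem_union_left _ hvB
          · exact Finset.mem_union_right _ (Finset.mem_sdiff.2 ⟨hv, hvB⟩)
      _ ≤ B.card + (spread G B \ B).card := Finset.card_union_le _ _
  refine h1.trans (Nat.add_le_add_left ?_ _)
  set pick : V → V := fun v => if h : ∃ u ∈ B, G.Adj u v then h.choose else v with hpick
  apply Finset.card_le_card_of_injOn (fun v => (pick v, v))
  · intro v hv
    rcases Finset.mem_sdiff.1 hv with ⟨hv1, hv2⟩
    have hex : ∃ u ∈ B, G.Adj u v := (mem_spread.1 hv1).resolve_left hv2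
    have : pick v = hex.choose := by simp [hpick, dif_pos hex]
    simp only [Finset.mem_coe]
    rw [mem_bpairs, this]
    exact ⟨hex.choose_spec.1, hv2, hex.choose_spec.2⟩
  · intro a _ b _ h
    exact congrArg Prod.snd h

lemma bdry_empty : bdry G (∅ : Finset V) = 0 := by
  classical
  have h : bpairs G (∅ : Finset V) = ∅ := by
    ext p; simp [mem_bpairs]
  simp [bdry, h]

end Basic

section PathLemmas
variable {n : ℕ}

lemma path_two_nbrs {u x y z : Fin n} (hx : (pathGraph n).Adj u x) (hy : (pathGraph n).Adj u y)
    (hz : (pathGraph n).Adj u z) (hxz : x ≠ z) (hyz : y ≠ z) : x = y := by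
  rw [pathGraph_adj] at hx hy hz
  have h1 : x.val ≠ z.val := fun h => hxz (Fin.ext h)
  have h2 : y.val ≠ z.val := fun h => hyz (Fin.ext h)
  apply Fin.ext; omega

lemma bdry_spread_le (B : Finset (Fin n)) :
    bdry (pathGraph n) (spread (pathGraph n) B) ≤ bdry (pathGraph n) B := by
  classical
  set G := pathGraph n
  set pick : Fin n → Fin n := fun u => if h : ∃ w ∈ B, G.Adj w u then h.choose else u with hpick
  apply Finset.card_le_card_of_injOn
    (fun p => if p.1 ∈ B then p else (pick p.1, p.1))
  · intro p hp
    rcases mem_bpairs.1 hp with ⟨h1, h2, h3⟩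
    simp only [Finset.mem_coe]
    by_cases hB : p.1 ∈ B
    · rw [if_pos hB, mem_bpairs]
      exact ⟨hB, fun hc => h2 (subset_spread B hc), h3⟩
    · rw [if_neg hB]
      have hex : ∃ w ∈ B, G.Adj w p.1 := (mem_spread.1 h1).resolve_left hB
      have hp1 : pick p.1 = hex.choose := by simp [hpick, dif_pos hex]
      rw [mem_bpairs, hp1]
      exact ⟨hex.choose_spec.1, hB, hex.choose_spec.2⟩
  · intro p hp q hq hfq
    rcases mem_bpairs.1 hp with ⟨h1, h2, h3⟩
    rcases mem_bpairs.1 hq with ⟨h1', h2', h3'⟩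
    dsimp only at hfq
    by_cases hB : p.1 ∈ B <;> by_cases hB' : q.1 ∈ B
    · rwa [if_pos hB, if_pos hB'] at hfq
    · rw [if_pos hB, if_neg hB'] at hfq
      exact absurd (congrArg Prod.snd hfq ▸ h1' : p.2 ∈ spread G B) h2
    · rw [if_neg hB, if_pos hB'] at hfq
      exact absurd ((congrArg Prod.snd hfq).symm ▸ h1 : q.2 ∈ spread G B) h2'
    · rw [if_neg hB, if_neg hB'] at hfq
      have hu : p.1 = q.1 := congrArg Prod.snd hfq
      have hex : ∃ w ∈ B, G.Adj w p.1 := (mem_spread.1 h1).resolve_left hB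
      have hw : pick p.1 ∈ B ∧ G.Adj (pick p.1) p.1 := by
        have : pick p.1 = hex.choose := by simp [hpick, dif_pos hex]
        rw [this]; exact ⟨hex.choose_spec.1, hex.choose_spec.2⟩
      have hadjw : G.Adj p.1 (pick p.1) := hw.2.symm
      have hv2 : p.2 ≠ pick p.1 := fun h => h2 (h ▸ subset_spread B hw.1)
      have hv2' : q.2 ≠ pick p.1 := fun h => h2' (h ▸ subset_spread B hw.1)
      have : p.2 = q.2 := path_two_nbrs h3 (hu ▸ h3') hadjw hv2 hv2'
      exact Prod.ext hu this

lemma nbrs_card_le (v : Fin n) (s : Finset (Fin n × Fin n))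
    (hs : ∀ p ∈ s, p.1 = v ∧ (pathGraph n).Adj p.1 p.2) : s.card ≤ 2 := by
  classical
  have h2 : Fintype.card Bool = 2 := by simp
  rw [← h2, ← Finset.card_univ]
  apply Finset.card_le_card_of_injOn (fun p => decide (p.2.val = v.val + 1))
  · intro x _; exact Finset.mem_coe.2 (Finset.mem_univ _)
  · intro p hp q hq hf
    obtain ⟨hp1, hp3⟩ := hs p hp
    obtain ⟨hq1, hq3⟩ := hs q hq
    rw [hp1] at hp3; rw [hq1] at hq3
    rw [pathGraph_adj] at hp3 hq3
    have : p.2 = q.2 := by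
      apply Fin.ext
      by_cases h : p.2.val = v.val + 1
      · have := (decide_eq_decide.mp hf).mp h; omega
      · have h' : ¬ q.2.val = v.val + 1 := fun hh => h ((decide_eq_decide.mp hf).mpr hh)
        omega
    exact Prod.ext (hp1.trans hq1.symm) this

lemma bdry_insert_le (S : Finset (Fin n)) (v : Fin n) :
    bdry (pathGraph n) (insert v S) ≤ bdry (pathGraph n) S + 2 := by
  classical
  set G := pathGraph n
  have hsub : bpairs G (insert v S) ⊆ bpairs G S ∪
      ((Finset.univ ×ˢ Finset.univ).filter
        (fun p : Fin n × Fin n => p.1 = v ∧ (p.2 ∉ insert v S) ∧ G.Adj p.1 p.2)) := by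
    intro p hp
    rcases mem_bpairs.1 hp with ⟨h1, h2, h3⟩
    rcases Finset.mem_insert.1 h1 with h1 | h1
    · exact Finset.mem_union_right _ (by
        simp only [Finset.mem_filter]
        exact ⟨Finset.mem_product.2 ⟨Finset.mem_univ _, Finset.mem_univ _⟩, h1, h2, h3⟩)
    · exact Finset.mem_union_left _ (mem_bpairs.2 ⟨h1, fun hc => h2 (Finset.mem_insert_of_mem hc), h3⟩)
  calc bdry G (insert v S) ≤ _ := Finset.card_le_card hsub
    _ ≤ bdry G S + _ := Finset.card_union_le _ _
    _ ≤ bdry G S + 2 := by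
        refine Nat.add_le_add_left (nbrs_card_le v _ ?_) _
        intro p hp
        simp only [Finset.mem_filter] at hp
        exact ⟨hp.2.1, hp.2.2.2⟩

lemma exists_bpair {S : Finset (Fin n)} (hne : S.Nonempty) (hnu : S ≠ Finset.univ) :
    ∃ u v : Fin n, u ∈ S ∧ v ∉ S ∧ (pathGraph n).Adj u v := by
  classical
  obtain ⟨a, ha⟩ := hne
  obtain ⟨b, hb⟩ : ∃ b, b ∉ S := by
    by_contra h
    push_neg at h
    exact hnu (Finset.eq_univ_iff_forall.2 h)
  rcases lt_trichotomy a.val b.val with hab | hab | hab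
  · set T := S.filter (fun x => x.val < b.val) with hT
    have hTne : T.Nonempty := ⟨a, Finset.mem_filter.2 ⟨ha, hab⟩⟩
    set u := T.max' hTne with hu
    have huT : u ∈ T := T.max'_mem hTne
    have huS : u ∈ S := (Finset.mem_filter.1 huT).1
    have hub : u.val < b.val := (Finset.mem_filter.1 huT).2
    have hvlt : u.val + 1 < n := lt_of_le_of_lt hub b.isLt
    refine ⟨u, ⟨u.val + 1, hvlt⟩, huS, ?_, pathGraph_adj.2 (Or.inl rfl)⟩
    intro hvS
    by_cases hc : u.val + 1 < b.val
    · have : (⟨u.val + 1, hvlt⟩ : Fin n) ∈ T := Finset.mem_filter.2 ⟨hvS, hc⟩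
      have := T.le_max' _ this
      rw [← hu] at this
      exact absurd this (by simp [Fin.le_def])
    · have : u.val + 1 = b.val := by omega
      have : (⟨u.val + 1, hvlt⟩ : Fin n) = b := Fin.ext this
      rw [this] at hvS; exact hb hvS
  · exact absurd (Fin.ext hab) (fun h => hb (h ▸ ha))
  · set T := S.filter (fun x => b.val < x.val) with hT
    have hTne : T.Nonempty := ⟨a, Finset.mem_filter.2 ⟨ha, hab⟩⟩
    set u := T.min' hTne with hu
    have huT : u ∈ T := T.min'_mem hTne
    have huS : u ∈ S := (Finset.mem_filter.1 huT).1
    have hub : b.val < u.val := (Finset.mem_filter.1 huT).2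
    have hvlt : u.val - 1 < n := lt_trans (by omega) u.isLt
    refine ⟨u, ⟨u.val - 1, hvlt⟩, huS, ?_, pathGraph_adj.2 (Or.inr (by simp; omega))⟩
    intro hvS
    by_cases hc : b.val < u.val - 1
    · have : (⟨u.val - 1, hvlt⟩ : Fin n) ∈ T := Finset.mem_filter.2 ⟨hvS, hc⟩
      have := T.min'_le _ this
      rw [← hu] at this
      exact absurd this (by simp [Fin.le_def]; omega)
    · have : u.val - 1 = b.val := by omega
      have : (⟨u.val - 1, hvlt⟩ : Fin n) = b := Fin.ext this
      rw [this] at hvS; exact hb hvS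

lemma staller_move {S : Finset (Fin n)} (hne : S.Nonempty) (hnu : S ≠ Finset.univ) :
    ∃ v ∉ S, bdry (pathGraph n) (insert v S) ≤ bdry (pathGraph n) S := by
  classical
  obtain ⟨u, v, huS, hvS, hadj⟩ := exists_bpair hne hnu
  refine ⟨v, hvS, ?_⟩
  set G := pathGraph n
  have huv : (u, v) ∈ bpairs G S := mem_bpairs.2 ⟨huS, hvS, hadj⟩
  have hsub : bpairs G (insert v S) ⊆ (bpairs G S \ {(u, v)}) ∪
      ((Finset.univ ×ˢ Finset.univ).filter
        (fun p : Fin n × Fin n => p.1 = v ∧ p.2 ≠ u ∧ p.2 ∉ insert v S ∧ G.Adj p.1 p.2)) := by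
    intro p hp
    rcases mem_bpairs.1 hp with ⟨h1, h2, h3⟩
    rcases Finset.mem_insert.1 h1 with h1 | h1
    · apply Finset.mem_union_right
      simp only [Finset.mem_filter]
      refine ⟨Finset.mem_product.2 ⟨Finset.mem_univ _, Finset.mem_univ _⟩, h1, ?_, h2, h3⟩
      intro hc
      exact h2 (by rw [hc]; exact Finset.mem_insert_of_mem huS)
    · apply Finset.mem_union_left
      rw [Finset.mem_sdiff]
      constructor
      · exact mem_bpairs.2 ⟨h1, fun hc => h2 (Finset.mem_insert_of_mem hc), h3⟩
      · simp only [Finset.mem_singleton]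
        intro hc
        have : p.2 = v := congrArg Prod.snd hc
        exact h2 (this ▸ Finset.mem_insert_self v S)
  have hcard1 : ((Finset.univ ×ˢ Finset.univ).filter
      (fun p : Fin n × Fin n => p.1 = v ∧ p.2 ≠ u ∧ p.2 ∉ insert v S ∧ G.Adj p.1 p.2)).card ≤ 1 := by
    apply Finset.card_le_one.2
    intro p hp q hq
    simp only [Finset.mem_filter] at hp hq
    obtain ⟨-, hp1, hp2, -, hp4⟩ := hp
    obtain ⟨-, hq1, hq2, -, hq4⟩ := hq
    rw [hp1] at hp4; rw [hq1] at hq4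
    exact Prod.ext (hp1.trans hq1.symm) (path_two_nbrs hp4 hq4 hadj.symm hp2 hq2)
  calc bdry G (insert v S) ≤ _ := Finset.card_le_card hsub
    _ ≤ (bpairs G S \ {(u, v)}).card + 1 := le_trans (Finset.card_union_le _ _) (Nat.add_le_add_left hcard1 _)
    _ ≤ (bdry G S - 1) + 1 := by
        refine Nat.add_le_add_right ?_ 1
        rw [Finset.card_sdiff_of_subset (Finset.singleton_subset_iff.2 huv)]
        simp [bdry]
    _ ≤ bdry G S := by
        have : 1 ≤ bdry G S := Finset.card_pos.2 ⟨(u, v), huv⟩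
        omega

lemma bdry_zero_endpoint (hn : 0 < n) :
    bdry (pathGraph n) {(⟨0, hn⟩ : Fin n)} ≤ 1 := by
  classical
  apply Finset.card_le_one.2
  intro p hp q hq
  rcases mem_bpairs.1 hp with ⟨hp1, -, hp3⟩
  rcases mem_bpairs.1 hq with ⟨hq1, -, hq3⟩
  rw [Finset.mem_singleton] at hp1 hq1
  rw [hp1] at hp3; rw [hq1] at hq3
  rw [pathGraph_adj] at hp3 hq3
  simp only at hp3 hq3
  refine Prod.ext (hp1.trans hq1.symm) (Fin.ext ?_)
  omega

end PathLemmas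

def cB : ℕ → Bool → ℕ
  | 0, _ => 0
  | k+1, true => cB k false + 2*k + 1
  | k+1, false => cB k true + 1

lemma cB_id (k : ℕ) : 2 * cB k true + k % 2 = k*k + 2*k ∧ 2 * cB k false = k*k + k % 2 := by
  induction k with
  | zero => simp [cB]
  | succ k ih =>
    obtain ⟨h1, h2⟩ := ih
    have hs : (k+1)*(k+1) = k*k + 2*k + 1 := by ring
    constructor
    · show 2 * (cB k false + 2*k + 1) + (k+1) % 2 = _
      rw [hs]; omega
    · show 2 * (cB k true + 1) = _
      rw [hs]; omega

lemma lower_aux {n : ℕ} (turn : ℕ → Bool) (halt : ∀ i, turn (i+1) = !turn i) :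
    ∀ k i (B : Finset (Fin n)), B.Nonempty →
      B.card + k * bdry (pathGraph n) B + cB k (turn i) < n →
      ¬ EndBy (pathGraph n) turn i B k := by
  intro k
  induction k with
  | zero =>
    intro i B _ hlt hE
    have hB : B = Finset.univ := hE
    rw [hB, Finset.card_univ, Fintype.card_fin] at hlt
    have hc : cB 0 (turn i) = 0 := by cases turn i <;> rfl
    rw [hc] at hlt
    omega
  | succ k ih =>
    intro i B hne hlt hE
    have hcard : B.card < n := by
      have : B.card ≤ B.card + (k+1) * bdry (pathGraph n) B + cB (k+1) (turn i) := by omega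
      omega
    have hsp : ¬ (spread (pathGraph n) B = Finset.univ) := by
      intro hs
      have h1 : (spread (pathGraph n) B).card = n := by rw [hs, Finset.card_univ, Fintype.card_fin]
      have h2 := card_spread_le (G := pathGraph n) B
      have h3 : bdry (pathGraph n) B ≤ (k+1) * bdry (pathGraph n) B := Nat.le_mul_of_pos_left _ (Nat.succ_pos k)
      have h4 : 0 ≤ cB (k+1) (turn i) := Nat.zero_le _
      omega
    rcases hE with hE | hE | hE
    · rw [hE, Finset.card_univ, Fintype.card_fin] at hcard; omega
    · exact hsp hE
    · have hturn1 : turn (i+1) = !turn i := halt i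
      cases hturn : turn i
      · -- Staller
        rw [hturn] at hE
        rw [if_neg (by simp)] at hE
        have hsne : (spread (pathGraph n) B).Nonempty := hne.mono (subset_spread B)
        obtain ⟨v, hv, hbv⟩ := staller_move hsne hsp
        have hEv := hE v hv
        refine ih (i+1) _ (Finset.insert_nonempty _ _) ?_ hEv
        have hc1 : (insert v (spread (pathGraph n) B)).card ≤ B.card + bdry (pathGraph n) B + 1 := by
          have := Finset.card_insert_le v (spread (pathGraph n) B)
          have := card_spread_le (G := pathGraph n) B
          omega
        have hb1 : bdry (pathGraph n) (insert v (spread (pathGraph n) B)) ≤ bdry (pathGraph n) B := le_trans hbv (bdry_spread_le B)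
        have hmul : k * bdry (pathGraph n) (insert v (spread (pathGraph n) B)) ≤ k * bdry (pathGraph n) B :=
          Nat.mul_le_mul_left k hb1
        have hcB : cB k (turn (i+1)) = cB k true := by rw [hturn1, hturn]; rfl
        have hcB2 : cB (k+1) (turn i) = cB k true + 1 := by rw [hturn]; rfl
        rw [hcB]
        rw [hcB2] at hlt
        have hd : B.card + (k+1) * bdry (pathGraph n) B = B.card + k * bdry (pathGraph n) B + bdry (pathGraph n) B := by ring
        rw [hd] at hlt
        linarith
      · -- Burner
        rw [hturn] at hE
        rw [if_pos rfl] at hE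
        obtain ⟨v, hv, hEv⟩ := hE
        refine ih (i+1) _ (Finset.insert_nonempty _ _) ?_ hEv
        have hc1 : (insert v (spread (pathGraph n) B)).card ≤ B.card + bdry (pathGraph n) B + 1 := by
          have := Finset.card_insert_le v (spread (pathGraph n) B)
          have := card_spread_le (G := pathGraph n) B
          omega
        have hb1 : bdry (pathGraph n) (insert v (spread (pathGraph n) B)) ≤ bdry (pathGraph n) B + 2 :=
          le_trans (bdry_insert_le _ v) (by have := bdry_spread_le B; omega)
        have hmul : k * bdry (pathGraph n) (insert v (spread (pathGraph n) B)) ≤ k * (bdry (pathGraph n) B + 2) :=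
          Nat.mul_le_mul_left k hb1
        have hcB : cB k (turn (i+1)) = cB k false := by rw [hturn1, hturn]; rfl
        have hcB2 : cB (k+1) (turn i) = cB k false + 2*k + 1 := by rw [hturn]; rfl
        rw [hcB]
        rw [hcB2] at hlt
        have hd : B.card + (k+1) * bdry (pathGraph n) B = B.card + k * bdry (pathGraph n) B + bdry (pathGraph n) B := by ring
        have hd2 : k * (bdry (pathGraph n) B + 2) = k * bdry (pathGraph n) B + 2*k := by ring
        rw [hd] at hlt
        rw [hd2] at hmul
        linarith

lemma empty_ne_univ {n : ℕ} (hn : 0 < n) : (∅ : Finset (Fin n)) ≠ Finset.univ := by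
  intro h
  have := congrArg Finset.card h
  rw [Finset.card_empty, Finset.card_univ, Fintype.card_fin] at this
  omega

lemma halt_even : ∀ i, ((fun i => i % 2 == 0) (i+1) : Bool) = !((fun i => i % 2 == 0) i : Bool) := by
  intro i
  rcases Nat.mod_two_eq_zero_or_one i with h | h <;> simp [Nat.add_mod, h]

lemma halt_odd : ∀ i, ((fun i => i % 2 == 1) (i+1) : Bool) = !((fun i => i % 2 == 1) i : Bool) := by
  intro i
  rcases Nat.mod_two_eq_zero_or_one i with h | h <;> simp [Nat.add_mod, h]

lemma lower_bg {n : ℕ} (hn : 0 < n) (K : ℕ) (h : cB K true < n) :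
    ¬ EndBy (pathGraph n) (fun i => i % 2 == 0) 0 ∅ K := by
  cases K with
  | zero =>
    intro hE
    exact empty_ne_univ hn hE
  | succ k =>
    intro hE
    rcases hE with hE | hE | hE
    · exact empty_ne_univ hn hE
    · rw [spread_empty] at hE
      exact empty_ne_univ hn hE
    · rw [if_pos (by norm_num)] at hE
      obtain ⟨v, hv, hEv⟩ := hE
      refine lower_aux _ halt_even k 1 _ ?_ ?_ hEv
      · rw [spread_empty]; exact Finset.insert_nonempty _ _
      · rw [spread_empty]
        have hc : (insert v (∅ : Finset (Fin n))).card = 1 := by simp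
        have hb : bdry (pathGraph n) (insert v (∅ : Finset (Fin n))) ≤ 2 := by
          have := bdry_insert_le (∅ : Finset (Fin n)) v
          rw [bdry_empty] at this; omega
        have hmul : k * bdry (pathGraph n) (insert v (∅ : Finset (Fin n))) ≤ k * 2 :=
          Nat.mul_le_mul_left k hb
        have ht : cB k (1 % 2 == 0) = cB k false := rfl
        rw [ht]
        have hcB : cB (k+1) true = cB k false + 2*k + 1 := rfl
        have : k * 2 = 2 * k := by ring
        omega

lemma lower_bg' {n : ℕ} (hn : 0 < n) (K : ℕ)
    (h : ∀ k, K = k + 1 → 1 + k + cB k true < n) :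
    ¬ EndBy (pathGraph n) (fun i => i % 2 == 1) 0 ∅ K := by
  cases K with
  | zero =>
    intro hE
    exact empty_ne_univ hn hE
  | succ k =>
    intro hE
    have hk := h k rfl
    rcases hE with hE | hE | hE
    · exact empty_ne_univ hn hE
    · rw [spread_empty] at hE
      exact empty_ne_univ hn hE
    · rw [if_neg (by norm_num)] at hE
      have hv0 : (⟨0, hn⟩ : Fin n) ∉ spread (pathGraph n) (∅ : Finset (Fin n)) := by
        rw [spread_empty]; simp
      have hEv := hE _ hv0
      refine lower_aux _ halt_odd k 1 _ ?_ ?_ hEv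
      · rw [spread_empty]; exact Finset.insert_nonempty _ _
      · rw [spread_empty]
        have hc : (insert (⟨0, hn⟩ : Fin n) (∅ : Finset (Fin n))).card = 1 := by simp
        have hb : bdry (pathGraph n) (insert (⟨0, hn⟩ : Fin n) (∅ : Finset (Fin n))) ≤ 1 := by
          have := bdry_zero_endpoint hn
          simpa using this
        have hmul : k * bdry (pathGraph n) (insert (⟨0, hn⟩ : Fin n) (∅ : Finset (Fin n))) ≤ k * 1 :=
          Nat.mul_le_mul_left k hb
        have ht : cB k (1 % 2 == 1) = cB k true := rfl
        rw [ht]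
        omega

section RunMachinery
variable {V : Type*} [Fintype V] [DecidableEq V] {G : SimpleGraph V}

noncomputable def run (G : SimpleGraph V) (choice : ℕ → V) (turn : ℕ → Bool) :
    ℕ → ℕ → Finset V → Finset V
  | _, 0, B => B
  | i, k+1, B => run G choice turn (i+1) k
      (if turn i then insert (choice i) (spread G B) else spread G B)

lemma run_mono (choice : ℕ → V) (turn : ℕ → Bool) :
    ∀ k i {B B' : Finset V}, B ⊆ B' →
      run G choice turn i k B ⊆ run G choice turn i k B' := by
  intro k
  induction k with
  | zero => intro i B B' h; exact h
  | succ k ih =>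
    intro i B B' h
    show run G choice turn (i+1) k _ ⊆ run G choice turn (i+1) k _
    apply ih
    by_cases ht : turn i
    · rw [if_pos ht, if_pos ht]
      exact Finset.insert_subset_insert _ (spread_mono h)
    · rw [if_neg ht, if_neg ht]
      exact spread_mono h

lemma run_endBy (choice : ℕ → V) (turn : ℕ → Bool) :
    ∀ k i (B : Finset V), run G choice turn i k B = Finset.univ →
      EndBy G turn i B k := by
  intro k
  induction k with
  | zero => intro i B h; exact h
  | succ k ih =>
    intro i B h
    by_cases hB : B = Finset.univ
    · exact Or.inl hB
    by_cases hs : spread G B = Finset.univ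
    · exact Or.inr (Or.inl hs)
    refine Or.inr (Or.inr ?_)
    have hne : ∃ w, w ∉ spread G B := by
      by_contra hc
      push_neg at hc
      exact hs (Finset.eq_univ_iff_forall.2 hc)
    by_cases ht : turn i
    · rw [if_pos ht]
      rw [show run G choice turn i (k+1) B
          = run G choice turn (i+1) k (if turn i then insert (choice i) (spread G B) else spread G B) from rfl,
        if_pos ht] at h
      by_cases hc : choice i ∈ spread G B
      · obtain ⟨w, hw⟩ := hne
        refine ⟨w, hw, ih (i+1) _ ?_⟩
        have h1 : insert (choice i) (spread G B) ⊆ insert w (spread G B) := by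
          intro x hx
          rcases Finset.mem_insert.1 hx with hx | hx
          · exact Finset.mem_insert_of_mem (hx ▸ hc)
          · exact Finset.mem_insert_of_mem hx
        have hmono := run_mono (G := G) choice turn k (i+1) h1
        rw [h] at hmono
        exact Finset.univ_subset_iff.1 hmono
      · exact ⟨choice i, hc, ih (i+1) _ h⟩
    · rw [if_neg ht]
      rw [show run G choice turn i (k+1) B
          = run G choice turn (i+1) k (if turn i then insert (choice i) (spread G B) else spread G B) from rfl,
        if_neg ht] at h
      intro v hv
      apply ih (i+1)
      have h1 : spread G B ⊆ insert v (spread G B) := Finset.subset_insert _ _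
      have hmono := run_mono (G := G) choice turn k (i+1) h1
      rw [h] at hmono
      exact Finset.univ_subset_iff.1 hmono

variable {n : ℕ}

end RunMachinery

section PathRun
variable {n : ℕ}

lemma spread_step {B : Finset (Fin n)} {b : Fin n} (hb : b ∈ B) (x : Fin n) (m : ℕ)
    (h : Nat.dist x.val b.val ≤ m + 1) :
    ∃ b' ∈ spread (pathGraph n) B, Nat.dist x.val b'.val ≤ m := by
  rcases lt_trichotomy x.val b.val with hlt | heq | hgt
  · have hb1 : 1 ≤ b.val := by omega
    refine ⟨⟨b.val - 1, by omega⟩, mem_spread.2 (Or.inr ⟨b, hb, pathGraph_adj.2 (Or.inr (by simp; omega))⟩), ?_⟩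
    simp [Nat.dist] at h ⊢
    omega
  · exact ⟨b, subset_spread B hb, by simp [Nat.dist, heq]⟩
  · refine ⟨⟨b.val + 1, lt_of_le_of_lt (by omega) x.isLt⟩,
      mem_spread.2 (Or.inr ⟨b, hb, pathGraph_adj.2 (Or.inl rfl)⟩), ?_⟩
    simp [Nat.dist] at h ⊢
    omega

lemma cover_run (choice : ℕ → Fin n) (turn : ℕ → Bool) :
    ∀ k i (B : Finset (Fin n)),
      (∀ x : Fin n, (∃ b ∈ B, Nat.dist x.val b.val ≤ k) ∨
        ∃ j, j < k ∧ turn (i+j) = true ∧ Nat.dist x.val (choice (i+j)).val ≤ k - j - 1) →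
      run (pathGraph n) choice turn i k B = Finset.univ := by
  intro k
  induction k with
  | zero =>
    intro i B h
    apply Finset.eq_univ_iff_forall.2
    intro x
    rcases h x with ⟨b, hb, hd⟩ | ⟨j, hj, _⟩
    · have : x = b := by
        simp [Nat.dist] at hd
        exact Fin.ext (by omega)
      exact this ▸ hb
    · omega
  | succ k ih =>
    intro i B h
    show run (pathGraph n) choice turn (i+1) k _ = Finset.univ
    apply ih
    intro x
    have hsub : spread (pathGraph n) B ⊆
        (if turn i then insert (choice i) (spread (pathGraph n) B) else spread (pathGraph n) B) := by
      split
      · exact Finset.subset_insert _ _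
      · exact Finset.Subset.refl _
    rcases h x with ⟨b, hb, hd⟩ | ⟨j, hj, ht, hd⟩
    · obtain ⟨b', hb', hd'⟩ := spread_step hb x k hd
      exact Or.inl ⟨b', hsub hb', hd'⟩
    · cases j with
      | zero =>
        left
        refine ⟨choice i, ?_, ?_⟩
        · rw [if_pos (by simpa using ht)]
          exact Finset.mem_insert_self _ _
        · simpa using hd
      | succ j =>
        right
        refine ⟨j, by omega, ?_, ?_⟩
        · rw [show i + 1 + j = i + (j+1) by omega]; exact ht
        · rw [show i + 1 + j = i + (j+1) by omega]
          have heq : k + 1 - (j + 1) - 1 = k - j - 1 := by omega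
          rw [heq] at hd
          exact hd

end PathRun

def sB (K : ℕ) : ℕ → ℕ
  | 0 => 0
  | l+1 => sB K l + (2*(K - (2*l+1)) + 1)

lemma find_interval (s : ℕ → ℕ) (h0 : s 0 = 0) :
    ∀ T x, x < s T → ∃ l, l < T ∧ s l ≤ x ∧ x < s (l+1) := by
  intro T
  induction T with
  | zero => intro x hx; rw [h0] at hx; omega
  | succ T ih =>
    intro x hx
    by_cases h : x < s T
    · obtain ⟨l, h1, h2, h3⟩ := ih x h
      exact ⟨l, by omega, h2, h3⟩
    · exact ⟨T, by omega, by omega, hx⟩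

lemma sB_val (K : ℕ) : ∀ l, 2*l ≤ K+1 → sB K l + 2*l*l = 2*K*l + l := by
  intro l
  induction l with
  | zero => simp [sB]
  | succ l ih =>
    intro h
    have hKl : 2*l+1 ≤ K := by omega
    have ihv := ih (by omega)
    have h1 : 2*(K - (2*l+1)) + (4*l + 2) = 2*K := by omega
    show sB K l + (2*(K - (2*l+1)) + 1) + 2*(l+1)*(l+1) = 2*K*(l+1) + (l+1)
    have h2 : 2*(l+1)*(l+1) = 2*l*l + 4*l + 2 := by ring
    have h3 : 2*K*(l+1) = 2*K*l + 2*K := by ring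
    linarith

lemma sB_total (K : ℕ) : 2 * sB K ((K+1)/2) = K*K + K := by
  have hM : 2*((K+1)/2) ≤ K+1 := by omega
  have hv := sB_val K ((K+1)/2) hM
  rcases Nat.even_or_odd K with ⟨m, hm⟩ | ⟨m, hm⟩
  · have hMm : (K+1)/2 = m := by omega
    rw [hMm] at hv ⊢
    subst hm
    nlinarith [hv]
  · have hMm : (K+1)/2 = m+1 := by omega
    rw [hMm] at hv ⊢
    subst hm
    nlinarith [hv]

lemma upper_bg {n K : ℕ} (hn : 0 < n) (hK : 2*n ≤ K*K + K) :
    EndBy (pathGraph n) (fun i => i % 2 == 0) 0 ∅ K := by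
  have hmin : ∀ j : ℕ, min (sB K (j/2) + (K - (2*(j/2)+1))) (n-1) < n := by
    intro j; omega
  set choice : ℕ → Fin n := fun j => ⟨min (sB K (j/2) + (K - (2*(j/2)+1))) (n-1), hmin j⟩ with hch
  apply run_endBy choice (fun i => i % 2 == 0) K 0
  apply cover_run
  intro x
  right
  have hsB : n ≤ sB K ((K+1)/2) := by have := sB_total K; nlinarith
  obtain ⟨l, hl, h1, h2⟩ := find_interval (sB K) rfl ((K+1)/2) x.val (lt_of_lt_of_le x.isLt hsB)
  refine ⟨2*l, by omega, ?_, ?_⟩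
  · simp [Nat.mul_mod_right]
  · have hc : (choice (0 + 2*l)).val = min (sB K l + (K - (2*l+1))) (n-1) := by
      have hdiv : (0 + 2*l)/2 = l := by omega
      simp only [hch, hdiv]
    have hs1 : sB K (l+1) = sB K l + (2*(K - (2*l+1)) + 1) := rfl
    have hxn : x.val < n := x.isLt
    rw [hc]
    simp only [Nat.dist]
    omega

def Llist : ℕ → ℕ → List ℕ
  | 0, _ => []
  | M+1, K => (2*K - 1) :: Llist M (K-2)

def Good : List ℕ → Prop
  | [] => True
  | a :: t => a ≤ t.sum + 4 ∧ Good t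

lemma list_subsum : ∀ (L : List ℕ), Good L → ∀ u, u + 3 ≤ L.sum →
    ∃ t : List ℕ, t.Sublist L ∧ u ≤ t.sum ∧ t.sum ≤ u + 3 := by
  intro L
  induction L with
  | nil => intro _ u hu; simp at hu
  | cons a tl ih =>
    intro hG u hu
    obtain ⟨hga, hgt⟩ := hG
    rw [List.sum_cons] at hu
    by_cases h1 : u + 3 ≤ tl.sum
    · obtain ⟨t, ht, h2, h3⟩ := ih hgt u h1
      exact ⟨t, ht.cons _, h2, h3⟩
    · by_cases h2 : a ≤ u
      · obtain ⟨t, ht, h3, h4⟩ := ih hgt (u - a) (by omega)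
        exact ⟨a :: t, ht.cons₂ _, by rw [List.sum_cons]; omega, by rw [List.sum_cons]; omega⟩
      · by_cases h3 : u ≤ tl.sum
        · exact ⟨tl, (List.sublist_cons_self a tl), h3, by omega⟩
        · exact ⟨[a], by simpa using List.Sublist.cons₂ a (List.nil_sublist tl), by simp; omega, by simp; omega⟩

lemma sB_shift (M K : ℕ) (hK : 1 ≤ K) : sB K (M+1) = (2*K - 1) + sB (K-2) M := by
  induction M with
  | zero => show sB K 0 + (2*(K - 1) + 1) = _; simp [sB]; omega
  | succ M ih =>
    show sB K (M+1) + (2*(K - (2*(M+1)+1)) + 1) = (2*K-1) + (sB (K-2) M + (2*((K-2) - (2*M+1)) + 1))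
    rw [ih]
    omega

lemma Llist_sum (M : ℕ) : ∀ K, 2*M ≤ K+1 → (Llist M K).sum = sB K M := by
  induction M with
  | zero => intro K _; simp [Llist, sB]
  | succ M ih =>
    intro K hM
    show ((2*K-1) :: Llist M (K-2)).sum = sB K (M+1)
    rw [List.sum_cons, ih (K-2) (by omega), sB_shift M K (by omega)]

lemma helper_q (q : ℕ) : 3*q ≤ q*q + 2 := by
  rcases le_or_gt q 3 with h | h
  · interval_cases q <;> decide
  · have : 3*q ≤ q*q := Nat.mul_le_mul_right q (by omega)
    omega

lemma good_L : ∀ K, Good (Llist ((K+1)/2) K) := by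
  intro K
  induction K using Nat.strong_induction_on with
  | _ K ih =>
    rcases Nat.lt_or_ge K 2 with hK | hK
    · interval_cases K
      · show Good []; trivial
      · show Good [2*1-1]; exact ⟨by simp, trivial⟩
    · have hM : (K+1)/2 = ((K-1)/2) + 1 := by omega
      rw [hM]
      show Good ((2*K-1) :: Llist ((K-1)/2) (K-2))
      have hM2 : (K-1)/2 = ((K-2)+1)/2 := by omega
      constructor
      · rw [Llist_sum ((K-1)/2) (K-2) (by omega)]
        have hs := sB_total (K-2)
        rw [← hM2] at hs
        have hq := helper_q (K-2)
        omega
      · rw [hM2]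
        exact ih (K-2) (by omega)

def lenB (K l : ℕ) : ℕ := 2*(K - (2*l+1)) + 1

def SL (K : ℕ) (g : ℕ → Bool) : ℕ → ℕ
  | 0 => 0
  | l+1 => SL K g l + (if g l then lenB K l else 0)

def SR (K : ℕ) (g : ℕ → Bool) : ℕ → ℕ
  | 0 => 0
  | l+1 => SR K g l + (if g l then 0 else lenB K l)

lemma SL_add_SR (K : ℕ) (g : ℕ → Bool) : ∀ l, SL K g l + SR K g l = sB K l := by
  intro l
  induction l with
  | zero => rfl
  | succ l ih =>
    show (SL K g l + _) + (SR K g l + _) = sB K l + _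
    cases hg : g l <;> simp [hg, lenB] <;> omega

lemma SL_false (K : ℕ) : ∀ l, SL K (fun _ => false) l = 0 := by
  intro l; induction l with
  | zero => rfl
  | succ l ih => show SL K _ l + _ = 0; simp [ih]

lemma SR_true (K : ℕ) : ∀ l, SR K (fun _ => true) l = 0 := by
  intro l; induction l with
  | zero => rfl
  | succ l ih => show SR K _ l + _ = 0; simp [ih]

def consg (c : Bool) (g : ℕ → Bool) : ℕ → Bool
  | 0 => c
  | l+1 => g l

lemma SL_cons (K : ℕ) (hK : 1 ≤ K) (c : Bool) (g : ℕ → Bool) :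
    ∀ m, SL K (consg c g) (m+1) = (if c then 2*K-1 else 0) + SL (K-2) g m := by
  intro m
  induction m with
  | zero =>
    show SL K (consg c g) 0 + (if consg c g 0 then lenB K 0 else 0) = _
    cases c <;> simp [SL, consg, lenB] <;> omega
  | succ m ih =>
    show SL K (consg c g) (m+1) + (if consg c g (m+1) then lenB K (m+1) else 0) = _ + (SL (K-2) g m + (if g m then lenB (K-2) m else 0))
    rw [ih]
    have : lenB K (m+1) = lenB (K-2) m := by simp [lenB]; omega
    rw [this]
    show _ = _
    cases hg : g m <;> simp [consg, hg] <;> omega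

lemma exists_g : ∀ (M : ℕ) (K : ℕ) (t : List ℕ), t.Sublist (Llist M K) → 2*M ≤ K+1 →
    ∃ g : ℕ → Bool, SL K g M = t.sum := by
  intro M
  induction M with
  | zero =>
    intro K t ht _
    have : t = [] := List.sublist_nil.1 ht
    exact ⟨fun _ => false, by simp [this, SL]⟩
  | succ M ih =>
    intro K t ht hM
    have hK : 1 ≤ K := by omega
    rw [show Llist (M+1) K = (2*K-1) :: Llist M (K-2) from rfl] at ht
    rcases List.sublist_cons_iff.1 ht with h | ⟨r, hr, hrs⟩
    · obtain ⟨g, hg⟩ := ih (K-2) t h (by omega)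
      exact ⟨consg false g, by rw [SL_cons K hK false g M]; simp [hg]⟩
    · obtain ⟨g, hg⟩ := ih (K-2) r hrs (by omega)
      refine ⟨consg true g, ?_⟩
      rw [SL_cons K hK true g M]
      simp [hr, hg]

lemma exists_split (K a b : ℕ) (hab : a + b ≤ sB K ((K+1)/2))
    (h3 : a + b + 3 ≤ sB K ((K+1)/2) ∨ a = 0 ∨ b = 0) :
    ∃ g : ℕ → Bool, a ≤ SL K g ((K+1)/2) ∧ b ≤ SR K g ((K+1)/2) := by
  set M := (K+1)/2 with hM
  rcases h3 with h3 | h3 | h3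
  · obtain ⟨t, ht, h1, h2⟩ := list_subsum (Llist M K) (good_L K)
      a (by rw [Llist_sum M K (by omega)]; omega)
    obtain ⟨g, hg⟩ := exists_g M K t ht (by omega)
    refine ⟨g, by omega, ?_⟩
    have := SL_add_SR K g M
    omega
  · refine ⟨fun _ => false, by simp [h3, SL_false], ?_⟩
    have h4 := SL_add_SR K (fun _ => false) M
    rw [SL_false K M] at h4
    omega
  · refine ⟨fun _ => true, ?_, by simp [h3]⟩
    have h4 := SL_add_SR K (fun _ => true) M
    rw [SR_true K M] at h4
    omega

lemma upper_bg' {n K : ℕ} (hn : 0 < n) (hK1 : 1 ≤ K) (hK : 2*n ≤ K*K + K) :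
    EndBy (pathGraph n) (fun i => i % 2 == 1) 0 ∅ K := by
  obtain ⟨K', rfl⟩ : ∃ K', K = K'+1 := ⟨K-1, by omega⟩
  refine Or.inr (Or.inr ?_)
  rw [if_neg (by norm_num)]
  intro v hv
  rw [spread_empty]
  set a := v.val - K' with ha
  set b := n - (v.val + K' + 1) with hb
  have hT := sB_total K'
  have hKK : (K'+1)*(K'+1) + (K'+1) = K'*K' + 3*K' + 2 := by ring
  rw [hKK] at hK
  have hvn : v.val < n := v.isLt
  have hab : a + b ≤ sB K' ((K'+1)/2) := by
    have : 2*(a+b) ≤ 2*n - 2*K' - 2 := by omega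
    omega
  have h3 : a + b + 3 ≤ sB K' ((K'+1)/2) ∨ a = 0 ∨ b = 0 := by
    by_cases haz : a = 0
    · exact Or.inr (Or.inl haz)
    by_cases hbz : b = 0
    · exact Or.inr (Or.inr hbz)
    left
    have hn2 : n = a + b + 2*K' + 1 := by omega
    have hK3 : 3 ≤ K' := by
      rcases Nat.lt_or_ge K' 3 with h | h
      · interval_cases K' <;> omega
      · exact h
    omega
  obtain ⟨g, hga, hgb⟩ := exists_split K' a b hab h3
  have hcen1 : ∀ l : ℕ, min (SL K' g l + (K' - (2*l+1))) (n-1) < n := fun l => by omega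
  have hcen2 : ∀ l : ℕ, (n - 1 - SR K' g l) - (K' - (2*l+1)) < n := fun l => by omega
  set choice : ℕ → Fin n := fun j =>
    if g ((j-1)/2) then ⟨min (SL K' g ((j-1)/2) + (K' - (2*((j-1)/2)+1))) (n-1), hcen1 _⟩
    else ⟨(n - 1 - SR K' g ((j-1)/2)) - (K' - (2*((j-1)/2)+1)), hcen2 _⟩ with hch
  apply run_endBy choice (fun i => i % 2 == 1) K' 1
  apply cover_run
  intro x
  by_cases hdist : Nat.dist x.val v.val ≤ K'
  · exact Or.inl ⟨v, Finset.mem_insert_self _ _, hdist⟩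
  right
  simp only [Nat.dist] at hdist
  by_cases hleft : x.val + K' < v.val
  · -- left region
    have hax : x.val < a := by omega
    obtain ⟨l, hl, h1, h2⟩ := find_interval (SL K' g) rfl ((K'+1)/2) x.val (by omega)
    have hstep : SL K' g (l+1) = SL K' g l + (if g l then lenB K' l else 0) := rfl
    have hgl : g l = true := by
      by_contra hc
      rw [Bool.not_eq_true] at hc
      rw [hstep, hc] at h2
      simp at h2
      omega
    refine ⟨2*l, by omega, by simp [Nat.add_mod, Nat.mul_mod_right], ?_⟩
    have hdiv : (1 + 2*l - 1)/2 = l := by omega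
    have hcval : (choice (1 + 2*l)).val
        = min (SL K' g l + (K' - (2*l+1))) (n-1) := by
      simp [hch, hdiv, hgl]
    rw [hcval]
    rw [hstep] at h2
    simp [hgl, lenB] at h2
    simp only [Nat.dist]
    omega
  · -- right region
    have hxr : v.val + K' < x.val := by omega
    have hbx : n - 1 - x.val < b := by omega
    obtain ⟨l, hl, h1, h2⟩ := find_interval (SR K' g) rfl ((K'+1)/2) (n - 1 - x.val) (by omega)
    have hstep : SR K' g (l+1) = SR K' g l + (if g l then 0 else lenB K' l) := rfl
    have hgl : g l = false := by
      by_contra hc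
      rw [Bool.not_eq_false] at hc
      rw [hstep, hc] at h2
      simp at h2
      omega
    refine ⟨2*l, by omega, by simp [Nat.add_mod, Nat.mul_mod_right], ?_⟩
    have hdiv : (1 + 2*l - 1)/2 = l := by omega
    have hcval : (choice (1 + 2*l)).val
        = (n - 1 - SR K' g l) - (K' - (2*l+1)) := by
      simp [hch, hdiv, hgl]
    rw [hcval]
    rw [hstep] at h2
    simp [hgl, lenB] at h2
    simp only [Nat.dist]
    omega

lemma ceil_sqrt_le {c K : ℕ} (h : c ≤ (K+1)*(K+1)) :
    ⌈Real.sqrt (c : ℝ) - 1⌉ ≤ (K : ℤ) := by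
  rw [Int.ceil_le]
  push_cast
  have h1 : Real.sqrt c ≤ ((K:ℝ)+1) := by
    rw [show ((K:ℝ)+1) = Real.sqrt (((K:ℝ)+1)^2) by rw [Real.sqrt_sq (by positivity)]]
    apply Real.sqrt_le_sqrt
    have h2 : (c:ℝ) ≤ (((K:ℕ)+1)*((K:ℕ)+1) : ℕ) := by exact_mod_cast h
    push_cast at h2
    nlinarith
  linarith

theorem stmt16 (n : ℕ) (hn : 1 ≤ n) :
    (⌈Real.sqrt (2 * (n : ℝ) + 1) - 1⌉ ≤ (bg (SimpleGraph.pathGraph n) : ℤ) ∧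
      (bg (SimpleGraph.pathGraph n) : ℤ) ≤ ⌈Real.sqrt (2 * (n : ℝ) + 1/4) - 1/2⌉) ∧
    (⌈Real.sqrt (2 * (n : ℝ) + 2) - 1⌉ ≤ (bg' (SimpleGraph.pathGraph n) : ℤ) ∧
      (bg' (SimpleGraph.pathGraph n) : ℤ) ≤ ⌈Real.sqrt (2 * (n : ℝ) + 1/4) - 1/2⌉) := by
  have hn0 : 0 < n := hn
  have hKUpos : 1 ≤ ⌈Real.sqrt (2 * (n : ℝ) + 1/4) - 1/2⌉ := by
    have h14 : (1/2:ℝ) < Real.sqrt (2*(n:ℝ)+1/4) := by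
      have h1 : ((1:ℝ)/2) = Real.sqrt (1/4) := by
        rw [show (1/4:ℝ) = (1/2)^2 by norm_num, Real.sqrt_sq (by norm_num)]
      rw [h1]
      apply Real.sqrt_lt_sqrt (by norm_num)
      have : (1:ℝ) ≤ n := by exact_mod_cast hn
      linarith
    have := Int.ceil_pos.2 (show (0:ℝ) < Real.sqrt (2*(n:ℝ)+1/4) - 1/2 by linarith)
    omega
  set t := (⌈Real.sqrt (2 * (n : ℝ) + 1/4) - 1/2⌉).toNat with ht
  have htz : (t : ℤ) = ⌈Real.sqrt (2 * (n : ℝ) + 1/4) - 1/2⌉ := Int.toNat_of_nonneg (by omega)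
  have htpos : 1 ≤ t := by omega
  have hsq : 2*n ≤ t*t + t := by
    have h1 : Real.sqrt (2*(n:ℝ)+1/4) - 1/2 ≤ ((⌈Real.sqrt (2 * (n : ℝ) + 1/4) - 1/2⌉ : ℤ) : ℝ) :=
      Int.le_ceil _
    have h2 : ((⌈Real.sqrt (2 * (n : ℝ) + 1/4) - 1/2⌉ : ℤ) : ℝ) = (t:ℝ) := by
      rw [← htz]; push_cast; ring
    rw [h2] at h1
    have h3 : Real.sqrt (2*(n:ℝ)+1/4) ≤ (t:ℝ) + 1/2 := by linarith
    have h4 : 2*(n:ℝ)+1/4 ≤ ((t:ℝ)+1/2)^2 := by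
      have h5 := Real.sq_sqrt (show (0:ℝ) ≤ 2*(n:ℝ)+1/4 by positivity)
      nlinarith [Real.sqrt_nonneg (2*(n:ℝ)+1/4)]
    have h6 : 2*(n:ℝ) ≤ (t:ℝ)*(t:ℝ) + (t:ℝ) := by nlinarith
    exact_mod_cast h6
  have hmem1 : EndBy (SimpleGraph.pathGraph n) (fun i => i % 2 == 0) 0 ∅ t := upper_bg hn0 hsq
  have hmem2 : EndBy (SimpleGraph.pathGraph n) (fun i => i % 2 == 1) 0 ∅ t := upper_bg' hn0 htpos hsq
  have hbg_le : bg (SimpleGraph.pathGraph n) ≤ t := Nat.sInf_le hmem1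
  have hbg'_le : bg' (SimpleGraph.pathGraph n) ≤ t := Nat.sInf_le hmem2
  have hk1 : EndBy (SimpleGraph.pathGraph n) (fun i => i % 2 == 0) 0 ∅ (bg (SimpleGraph.pathGraph n)) :=
    Nat.sInf_mem (⟨t, hmem1⟩ : Set.Nonempty {k | EndBy (SimpleGraph.pathGraph n) (fun i => i % 2 == 0) 0 ∅ k})
  have hk2 : EndBy (SimpleGraph.pathGraph n) (fun i => i % 2 == 1) 0 ∅ (bg' (SimpleGraph.pathGraph n)) :=
    Nat.sInf_mem (⟨t, hmem2⟩ : Set.Nonempty {k | EndBy (SimpleGraph.pathGraph n) (fun i => i % 2 == 1) 0 ∅ k})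
  have hlow1 : 2*n+1 ≤ (bg (SimpleGraph.pathGraph n)+1)*(bg (SimpleGraph.pathGraph n)+1) := by
    set k0 := bg (SimpleGraph.pathGraph n) with hk0
    have h1 : ¬ (cB k0 true < n) := fun h => lower_bg hn0 k0 h hk1
    have h2 := (cB_id k0).1
    have h3 : (k0+1)*(k0+1) = k0*k0 + 2*k0 + 1 := by ring
    omega
  have hlow2 : 2*n+2 ≤ (bg' (SimpleGraph.pathGraph n)+1)*(bg' (SimpleGraph.pathGraph n)+1) := by
    rcases Nat.eq_zero_or_pos (bg' (SimpleGraph.pathGraph n)) with h0 | h0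
    · exfalso
      rw [h0] at hk2
      exact empty_ne_univ hn0 hk2
    · obtain ⟨k, hkk⟩ : ∃ k, bg' (SimpleGraph.pathGraph n) = k+1 :=
        ⟨bg' (SimpleGraph.pathGraph n)-1, by omega⟩
      rw [hkk] at hk2 ⊢
      have h1 : ¬ (1 + k + cB k true < n) := fun h =>
        lower_bg' hn0 (k+1) (fun k'' hkeq => by
          obtain rfl : k'' = k := by omega
          exact h) hk2
      have h2 := (cB_id k).1
      have h3 : (k+1+1)*(k+1+1) = k*k + 2*k + (2*k) + 4 := by ring
      omega
  refine ⟨⟨?_, ?_⟩, ?_, ?_⟩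
  · rw [show (2*(n:ℝ)+1) = ((2*n+1:ℕ):ℝ) by push_cast; ring]
    exact ceil_sqrt_le hlow1
  · calc (bg (SimpleGraph.pathGraph n) : ℤ) ≤ (t : ℤ) := by exact_mod_cast hbg_le
      _ = _ := htz
  · rw [show (2*(n:ℝ)+2) = ((2*n+2:ℕ):ℝ) by push_cast; ring]
    exact ceil_sqrt_le hlow2
  · calc (bg' (SimpleGraph.pathGraph n) : ℤ) ≤ (t : ℤ) := by exact_mod_cast hbg'_le
      _ = _ := htz

end BurningGame
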